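/- arXiv:2309.04449 — 2 statements merged into one kernel-verified Lean document; each statement's English description precedes it below -/
import Mathlib

section
/- Derivative of symmetric powers of a fundamental matrix: if Y(t) is a square matrix of differentiable functions satisfying Y' = A·Y, then the k-th symmetric power satisfies (Sym^k Y)' = k · (A ⊙ Id^{⊙(k-1)}) · Sym^k Y, where A ⊙ Id^{⊙(k-1)} is the endomorphism of Sym^k(K^n) given on decomposable elements by (A ⊙ Id^{⊙(k-1)})(v_1⊙···⊙v_k) = (1/k) Σ_{i=1}^{k} (A v_i) ⊙ v_1 ⊙···⊙ \hat{v_i} ⊙···⊙ v_k. -/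
open MvPolynomial

/-- The symmetric power of a matrix `A`, modelled as the degree-preserving algebra
endomorphism of the symmetric algebra `Sym(ℝⁿ) ≅ ℝ[X₁,…,Xₙ]` sending
`Xᵢ = eᵢ ↦ A eᵢ = Σⱼ Aⱼᵢ Xⱼ`; its restriction to degree `k` is `Sym^k A`. -/
noncomputable def symMap {n : ℕ} (A : Matrix (Fin n) (Fin n) ℝ) :
    MvPolynomial (Fin n) ℝ →ₐ[ℝ] MvPolynomial (Fin n) ℝ :=
  aeval fun i => ∑ j, C (A j i) * X j

/-- The operator `k · (A ⊙ Id^{⊙(k-1)})`, i.e. the unique derivation of the symmetric algebra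
extending `A` in degree 1 (`Xᵢ ↦ Σⱼ Aⱼᵢ Xⱼ`). -/
noncomputable def symDer {n : ℕ} (A : Matrix (Fin n) (Fin n) ℝ) :
    Derivation ℝ (MvPolynomial (Fin n) ℝ) (MvPolynomial (Fin n) ℝ) :=
  mkDerivation ℝ fun i => ∑ j, C (A j i) * X j

lemma coeff_symMap_X {n : ℕ} (B : Matrix (Fin n) (Fin n) ℝ) (i : Fin n) (m : (Fin n) →₀ ℕ) :
    coeff m (symMap B (X i)) = ∑ j, B j i * coeff m (X j : MvPolynomial (Fin n) ℝ) := by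
  simp [symMap, coeff_sum, coeff_C_mul]

lemma coeff_symDer_symMap_X {n : ℕ} (B A : Matrix (Fin n) (Fin n) ℝ) (i : Fin n)
    (m : (Fin n) →₀ ℕ) :
    coeff m (symDer A (symMap B (X i)))
      = ∑ l, (A * B) l i * coeff m (X l : MvPolynomial (Fin n) ℝ) := by
  simp [symMap, symDer, mkDerivation_X, Finset.mul_sum, Matrix.mul_apply, Finset.sum_mul,
    coeff_sum, coeff_C_mul]
  rw [Finset.sum_comm]
  exact Finset.sum_congr rfl fun x _ => Finset.sum_congr rfl fun y _ => by ring

lemma key {n : ℕ} (Y A : ℝ → Matrix (Fin n) (Fin n) ℝ)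
    (hY : ∀ t i j, HasDerivAt (fun s => Y s i j) ((A t * Y t) i j) t)
    (t : ℝ) (p : MvPolynomial (Fin n) ℝ) :
    ∀ m, HasDerivAt (fun s => coeff m (symMap (Y s) p))
      (coeff m (symDer (A t) (symMap (Y t) p))) t := by
  induction p using MvPolynomial.induction_on with
  | C a =>
    intro m
    simpa [symMap, symDer] using hasDerivAt_const t (coeff m (C a : MvPolynomial (Fin n) ℝ))
  | add p q hp hq =>
    intro m
    simpa [map_add, coeff_add] using (hp m).fun_add (hq m)
  | mul_X p i hp =>
    intro m
    have hXi : ∀ b, HasDerivAt (fun s => coeff b (symMap (Y s) (X i)))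
        (coeff b (symDer (A t) (symMap (Y t) (X i)))) t := by
      intro b
      have : HasDerivAt (fun s => ∑ j, Y s j i * coeff b (X j : MvPolynomial (Fin n) ℝ))
          (∑ j, (A t * Y t) j i * coeff b (X j : MvPolynomial (Fin n) ℝ)) t :=
        HasDerivAt.fun_sum fun j _ => (hY t j i).mul_const _
      simpa [coeff_symMap_X, coeff_symDer_symMap_X] using this
    have hterm : HasDerivAt
        (fun s => ∑ x ∈ Finset.HasAntidiagonal.antidiagonal m,
          coeff x.1 (symMap (Y s) p) * coeff x.2 (symMap (Y s) (X i)))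
        (∑ x ∈ Finset.HasAntidiagonal.antidiagonal m,
          (coeff x.1 (symDer (A t) (symMap (Y t) p)) * coeff x.2 (symMap (Y t) (X i))
          + coeff x.1 (symMap (Y t) p) * coeff x.2 (symDer (A t) (symMap (Y t) (X i))))) t :=
      HasDerivAt.fun_sum fun x _ => (hp x.1).mul (hXi x.2)
    have heq : (fun s => coeff m (symMap (Y s) (p * X i)))
        = fun s => ∑ x ∈ Finset.HasAntidiagonal.antidiagonal m,
          coeff x.1 (symMap (Y s) p) * coeff x.2 (symMap (Y s) (X i)) := by
      funext s
      rw [map_mul, coeff_mul]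
    rw [heq]
    convert hterm using 1
    rw [Finset.sum_add_distrib, ← coeff_mul, ← coeff_mul, map_mul, Derivation.leibniz,
      smul_eq_mul, smul_eq_mul, coeff_add,
      mul_comm (symDer (A t) (symMap (Y t) p)) (symMap (Y t) (X i)), add_comm]

/-- Derivative of symmetric powers of a fundamental matrix: if `Y' = A·Y`, then the
`k`-th symmetric power satisfies `(Sym^k Y)' = k (A ⊙ Id^{⊙(k-1)}) · Sym^k Y`, where
`k (A ⊙ Id^{⊙(k-1)})` is the derivation extending `A` in degree 1 (stated entrywise,
i.e. coefficientwise on each homogeneous `p` of degree `k`). -/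
theorem symPow_deriv {n : ℕ} (k : ℕ) (Y A : ℝ → Matrix (Fin n) (Fin n) ℝ)
    (hY : ∀ t i j, HasDerivAt (fun s => Y s i j) ((A t * Y t) i j) t)
    (p : MvPolynomial (Fin n) ℝ) (hp : p.IsHomogeneous k)
    (t : ℝ) (m : (Fin n) →₀ ℕ) :
    HasDerivAt (fun s => coeff m (symMap (Y s) p))
      (coeff m (symDer (A t) (symMap (Y t) p))) t :=
  key Y A hY t p m
end

section
/- The function f(x,y) = x·sin(y)^{α/(1−α)} − (α/(α−1))·cos(y)·₂F₁(1/2, 1 + α/(2(α−1)); 3/2; cos²(y)) is a first integral of the system x' = αx(1 − x cos y), y' = −(α−1) x sin y; that is, αx(1 − x cos y)·∂f/∂x − (α−1)x sin(y)·∂f/∂y = 0 on the domain where sin y > 0 and α ≠ 1. -/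
open Real

/-- The Gaussian hypergeometric function `₂F₁(a,b;c;z) = Σₖ (a)ₖ(b)ₖ/((c)ₖ k!) zᵏ`. -/
noncomputable def gauss2F1 (a b c z : ℝ) : ℝ :=
  ∑' k : ℕ,
    ((ascPochhammer ℝ k).eval a * (ascPochhammer ℝ k).eval b /
      ((ascPochhammer ℝ k).eval c * (Nat.factorial k))) * z ^ k

/-- The first integral of the transformed Dixon system found in the paper:
`f(x,y) = x sin(y)^{α/(1−α)} − (α/(α−1)) cos(y) ₂F₁(1/2, 1+α/(2(α−1)); 3/2; cos² y)`. -/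
noncomputable def dixonF (α x y : ℝ) : ℝ :=
  x * sin y ^ (α / (1 - α)) -
    (α / (α - 1)) * cos y *
      gauss2F1 (1 / 2) (1 + α / (2 * (α - 1))) (3 / 2) (cos y ^ 2)

noncomputable def pochCoef (b : ℝ) (k : ℕ) : ℝ := (ascPochhammer ℝ k).eval b / (Nat.factorial k)

lemma pochCoef_zero (b : ℝ) : pochCoef b 0 = 1 := by simp [pochCoef]

lemma pochCoef_succ (b : ℝ) (k : ℕ) :
    pochCoef b (k + 1) = pochCoef b k * (b + k) / (k + 1) := by
  rw [pochCoef, pochCoef, ascPochhammer_succ_eval, Nat.factorial_succ]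
  push_cast
  rw [div_mul_eq_mul_div, div_div]
  ring_nf

lemma pochCoef_bound (b : ℝ) (m : ℕ) (hb : |b| ≤ m) :
    ∀ k, |pochCoef b k| ≤ ((k : ℝ) + 1) ^ m := by
  intro k
  induction k with
  | zero => simp [pochCoef_zero]
  | succ k ih =>
      have hk1 : (0:ℝ) < (k : ℝ) + 1 := by positivity
      have habs : |b + k| ≤ (m : ℝ) + k := by
        calc |b + k| ≤ |b| + |(k:ℝ)| := abs_add_le _ _
        _ ≤ (m : ℝ) + k := by rw [abs_of_nonneg (by positivity : (0:ℝ) ≤ (k:ℝ))]; linarith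
      have key : ((m : ℝ) + k) / ((k:ℝ) + 1) ≤ ((k:ℝ) + 2) ^ m / ((k:ℝ) + 1) ^ m := by
        have hbern : 1 + (m : ℝ) * (1 / ((k:ℝ) + 1)) ≤ (1 + 1 / ((k:ℝ) + 1)) ^ m :=
          one_add_mul_le_pow (by
            have : (0:ℝ) ≤ 1 / ((k:ℝ)+1) := by positivity
            linarith) m
        have h1 : ((m:ℝ) + k) / ((k:ℝ) + 1) ≤ 1 + (m:ℝ) * (1 / ((k:ℝ)+1)) := by
          have e : (1 + (m:ℝ) * (1 / ((k:ℝ)+1))) = ((k:ℝ) + 1 + m) / ((k:ℝ)+1) := by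
            field_simp
          rw [e, div_le_div_iff₀ hk1 hk1]
          nlinarith
        have h2 : (1 + 1 / ((k:ℝ) + 1)) ^ m = ((k:ℝ) + 2) ^ m / ((k:ℝ) + 1) ^ m := by
          rw [← div_pow]
          congr 1
          field_simp
          ring
        linarith [h2 ▸ hbern]
      calc |pochCoef b (k+1)| = |pochCoef b k| * |b + k| / ((k:ℝ) + 1) := by
            rw [pochCoef_succ, abs_div, abs_mul, abs_of_pos hk1]
        _ ≤ (((k:ℝ)+1)^m * ((m:ℝ) + k)) / ((k:ℝ) + 1) := by gcongr
        _ = ((k:ℝ)+1)^m * (((m:ℝ) + k) / ((k:ℝ)+1)) := by ring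
        _ ≤ ((k:ℝ)+1)^m * (((k:ℝ)+2)^m / ((k:ℝ)+1)^m) :=
            mul_le_mul_of_nonneg_left key (by positivity)
        _ = ((k:ℝ)+2)^m := by field_simp
        _ = ((↑(k+1):ℝ)+1)^m := by push_cast; ring_nf

lemma summable_geom_pow (m : ℕ) {r : ℝ} (hr : |r| < 1) :
    Summable (fun k : ℕ => ((k:ℝ)+1)^m * r^k) := by
  apply Summable.of_norm_bounded
    (g := fun k : ℕ => (2:ℝ)^m * ((k:ℝ)^m * |r|^k) + (2:ℝ)^m * |r|^k)
  · exact ((summable_pow_mul_geometric_of_norm_lt_one (R := ℝ) m (by rwa [norm_eq_abs, abs_abs])).mul_left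
      _).add ((summable_geometric_of_norm_lt_one (K := ℝ) (by rwa [norm_eq_abs, abs_abs])).mul_left _)
  · intro k
    rw [norm_eq_abs, abs_mul, abs_pow, abs_of_nonneg (by positivity : (0:ℝ) ≤ (k:ℝ)+1),
      abs_pow]
    have h1 : ((k:ℝ)+1)^m ≤ (2:ℝ)^m * (k:ℝ)^m + (2:ℝ)^m := by
      rcases Nat.eq_zero_or_pos k with h | h
      · subst h
        have h2 : (1:ℝ) ≤ 2^m := one_le_pow₀ (by norm_num)
        have h3 : (0:ℝ) ≤ (2:ℝ)^m * (0:ℝ)^m := by positivity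
        push_cast
        simpa using by linarith
      · have hk : (1:ℝ) ≤ (k:ℝ) := by exact_mod_cast h
        calc ((k:ℝ)+1)^m ≤ ((2:ℝ)*k)^m := by
              apply pow_le_pow_left₀ (by positivity)
              linarith
        _ = (2:ℝ)^m * (k:ℝ)^m := mul_pow _ _ _
        _ ≤ _ := le_add_of_nonneg_right (by positivity)
    calc ((k:ℝ)+1)^m * |r|^k ≤ ((2:ℝ)^m * (k:ℝ)^m + 2^m) * |r|^k := by
          apply mul_le_mul_of_nonneg_right h1 (by positivity)
    _ = (2:ℝ)^m * ((k:ℝ)^m * |r|^k) + 2^m * |r|^k := by ring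

lemma summable_pochCoef (b : ℝ) {z : ℝ} (hz : |z| < 1) :
    Summable (fun k : ℕ => pochCoef b k * z ^ k) := by
  apply Summable.of_norm_bounded (g := fun k : ℕ => ((k:ℝ)+1)^(⌈|b|⌉₊) * |z|^k)
  · exact summable_geom_pow _ (by rwa [abs_abs])
  · intro k
    rw [norm_eq_abs, abs_mul, abs_pow]
    exact mul_le_mul_of_nonneg_right (pochCoef_bound b _ (Nat.le_ceil _) k) (by positivity)

lemma deriv_term_bound (b : ℝ) (m : ℕ) (hb : |b| ≤ m) {r : ℝ} (hr : 0 < r) :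
    ∀ (n : ℕ) (y : ℝ), |y| ≤ r →
      ‖pochCoef b n * ((n:ℝ) * y ^ (n - 1))‖ ≤ ((n:ℝ)+1)^(m+1) * r^n / r := by
  intro n y hyr
  cases n with
  | zero => simp; positivity
  | succ j =>
      have hyn : (0:ℝ) ≤ |y| := abs_nonneg y
      rw [norm_eq_abs, abs_mul, abs_mul, abs_pow, Nat.add_sub_cancel,
        abs_of_nonneg (by positivity : (0:ℝ) ≤ ((j+1:ℕ):ℝ))]
      have e : ((j+1:ℕ):ℝ) + 1 = (j:ℝ) + 2 := by push_cast; ring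
      have hrn : ((j+1:ℕ):ℝ)+1 ≥ 0 := by positivity
      have h1 : |pochCoef b (j+1)| ≤ (((j+1:ℕ):ℝ)+1)^m := pochCoef_bound b m hb _
      have h2 : |y|^j ≤ r^j := pow_le_pow_left₀ hyn hyr j
      have e2 : (((j+1:ℕ):ℝ)+1)^(m+1) * r^(j+1) / r = (((j+1:ℕ):ℝ)+1)^(m+1) * r^j := by
        rw [pow_succ]
        field_simp
        ring
      rw [e2, pow_succ]
      calc |pochCoef b (j+1)| * (((j+1:ℕ):ℝ) * |y|^j)
          ≤ (((j+1:ℕ):ℝ)+1)^m * ((((j+1:ℕ):ℝ)+1) * r^j) := by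
            apply mul_le_mul h1 _ (by positivity) (by positivity)
            apply mul_le_mul (by push_cast; linarith) h2 (by positivity) (by positivity)
        _ = (((j+1:ℕ):ℝ)+1)^m * (((j+1:ℕ):ℝ)+1) * r^j := by ring

/-- The binomial-type series `S_b(z) = ∑ (b)_k / k! z^k`. -/
noncomputable def binS (b z : ℝ) : ℝ := ∑' k : ℕ, pochCoef b k * z ^ k

lemma hasDerivAt_binS (b : ℝ) {z : ℝ} (hz : |z| < 1) :
    HasDerivAt (fun z => binS b z) (b * binS b z / (1 - z)) z := by
  set m := ⌈|b|⌉₊ with hm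
  have hbm : |b| ≤ m := Nat.le_ceil _
  set r : ℝ := (|z| + 1) / 2 with hrdef
  have hr0 : 0 < r := by positivity
  have hzr : |z| < r := by rw [hrdef]; linarith
  have hr1 : r < 1 := by rw [hrdef]; linarith
  have key : HasDerivAt (fun z => binS b z)
      (∑' n : ℕ, pochCoef b n * ((n:ℝ) * z ^ (n - 1))) z := by
    apply hasDerivAt_tsum_of_isPreconnected
      (u := fun n : ℕ => ((n:ℝ)+1)^(m+1) * r^n / r)
      (t := Metric.ball (0:ℝ) r) (y₀ := (0:ℝ))
      (g' := fun n y => pochCoef b n * ((n:ℝ) * y ^ (n - 1)))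
    · exact (summable_geom_pow (m+1) (by rw [abs_of_pos hr0]; exact hr1)).div_const r
    · exact Metric.isOpen_ball
    · exact (convex_ball _ _).isPreconnected
    · intro n y _
      exact (hasDerivAt_pow n y).const_mul (pochCoef b n)
    · intro n y hy
      exact deriv_term_bound b m hbm hr0 n y (le_of_lt (mem_ball_zero_iff.1 hy))
    · exact Metric.mem_ball_self hr0
    · exact summable_pochCoef b (by norm_num)
    · exact mem_ball_zero_iff.2 (by rwa [norm_eq_abs])
  have hsum' : Summable (fun n : ℕ => pochCoef b n * ((n:ℝ) * z ^ (n - 1))) := by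
    apply Summable.of_norm_bounded (g := fun n : ℕ => ((n:ℝ)+1)^(m+1) * r^n / r)
    · exact (summable_geom_pow (m+1) (by rw [abs_of_pos hr0]; exact hr1)).div_const r
    · exact fun n => deriv_term_bound b m hbm hr0 n z hzr.le
  have hsumS : Summable (fun k : ℕ => pochCoef b k * z ^ k) := summable_pochCoef b hz
  have h10 : 0 < 1 - z := by have := (abs_lt.1 hz).2; linarith
  have h0 : (∑' n : ℕ, pochCoef b n * ((n:ℝ) * z ^ (n - 1)))
      = ∑' k : ℕ, (pochCoef b k * (b + k)) * z ^ k := by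
    rw [Summable.tsum_eq_zero_add hsum']
    simp only [Nat.cast_zero, zero_mul, mul_zero, zero_add]
    apply tsum_congr
    intro k
    rw [pochCoef_succ]
    have hk1 : ((k:ℝ) + 1) ≠ 0 := by positivity
    have he : (k + 1 - 1 : ℕ) = k := rfl
    rw [he]
    push_cast
    field_simp
  have h1 : (∑' k : ℕ, (pochCoef b k * (b + k)) * z ^ k)
      = b * binS b z + z * (∑' n : ℕ, pochCoef b n * ((n:ℝ) * z ^ (n - 1))) := by
    rw [binS, ← tsum_mul_left (a := b), ← tsum_mul_left (a := z),
      ← Summable.tsum_add (hsumS.mul_left b) (hsum'.mul_left z)]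
    apply tsum_congr
    intro k
    cases k with
    | zero => simp; ring
    | succ j =>
        have he : (j + 1 - 1 : ℕ) = j := rfl
        rw [he]
        push_cast
        rw [pow_succ]
        ring
  have hD := h0.trans h1
  convert key using 1
  rw [eq_comm, eq_div_iff h10.ne']
  linear_combination hD

lemma binS_zero (b : ℝ) : binS b 0 = 1 := by
  rw [binS, tsum_eq_single 0 (fun k hk => by simp [zero_pow hk])]
  simp [pochCoef_zero]

lemma binS_eq (b : ℝ) {z : ℝ} (hz : |z| < 1) : binS b z = (1 - z) ^ (-b) := by
  have h1z : 0 < 1 - z := by have := (abs_lt.1 hz).2; linarith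
  have hderiv : ∀ w ∈ Set.Ioo (-1:ℝ) 1,
      HasDerivAt (fun w => binS b w * (1 - w) ^ b) 0 w := by
    intro w hw
    obtain ⟨hw1, hw2⟩ := hw
    have hw' : |w| < 1 := abs_lt.2 ⟨hw1, hw2⟩
    have h1w : 0 < 1 - w := by linarith
    have hS := hasDerivAt_binS b hw'
    have hpow : HasDerivAt (fun w : ℝ => (1 - w) ^ b) (b * (1 - w) ^ (b - 1) * (-1)) w := by
      have h := Real.hasDerivAt_rpow_const (x := 1 - w) (p := b) (Or.inl h1w.ne')
      exact h.comp w ((hasDerivAt_id w).const_sub 1)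
    have hmul := hS.mul hpow
    refine hmul.congr_deriv (Eq.symm ?_)
    have e : (1 - w) ^ b = (1 - w) ^ (b - 1) * (1 - w) := by
      rw [← Real.rpow_add_one h1w.ne' (b-1)]
      ring_nf
    rw [e]
    field_simp
    ring
  have hmemz : z ∈ Set.Ioo (-1:ℝ) 1 := ⟨(abs_lt.1 hz).1, (abs_lt.1 hz).2⟩
  have hmem0 : (0:ℝ) ∈ Set.Ioo (-1:ℝ) 1 := by norm_num
  have hconst : binS b z * (1 - z) ^ b = binS b 0 * (1 - 0) ^ b := by
    apply Convex.is_const_of_fderivWithin_eq_zero (𝕜 := ℝ) (f := fun w => binS b w * (1 - w) ^ b)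
      (convex_Ioo (-1:ℝ) 1)
    · exact fun w hw => ((hderiv w hw).differentiableAt).differentiableWithinAt
    · intro w hw
      rw [fderivWithin_of_isOpen isOpen_Ioo hw,
        ((hderiv w hw).hasFDerivAt).fderiv]
      ext u
      simp
    · exact hmemz
    · exact hmem0
  rw [binS_zero] at hconst
  simp only [sub_zero, Real.one_rpow, one_mul, mul_one] at hconst
  rw [Real.rpow_neg h1z.le]
  exact eq_inv_of_mul_eq_one_left hconst

lemma poch_three_halves (k : ℕ) :
    (ascPochhammer ℝ k).eval (3/2) = (2*(k:ℝ)+1) * (ascPochhammer ℝ k).eval (1/2) := by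
  induction k with
  | zero => simp
  | succ k ih =>
      rw [ascPochhammer_succ_eval, ascPochhammer_succ_eval, ih]
      push_cast
      ring

lemma gauss_coef_eq (b : ℝ) (k : ℕ) :
    (ascPochhammer ℝ k).eval (1/2) * (ascPochhammer ℝ k).eval b /
      ((ascPochhammer ℝ k).eval (3/2) * (Nat.factorial k))
    = pochCoef b k / (2*(k:ℝ)+1) := by
  have h1 : (0:ℝ) < (ascPochhammer ℝ k).eval (1/2) :=
    ascPochhammer_pos k (1/2) (by norm_num)
  have h2 : (2*(k:ℝ)+1) ≠ 0 := by positivity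
  have h3 : ((Nat.factorial k : ℝ)) ≠ 0 := Nat.cast_ne_zero.2 (Nat.factorial_ne_zero k)
  rw [poch_three_halves, pochCoef]
  field_simp

lemma gauss_link (b w : ℝ) :
    w * gauss2F1 (1/2) b (3/2) (w^2)
      = ∑' k : ℕ, (pochCoef b k / (2*(k:ℝ)+1)) * w^(2*k+1) := by
  rw [gauss2F1, ← tsum_mul_left]
  apply tsum_congr
  intro k
  rw [gauss_coef_eq, ← pow_mul, pow_succ]
  ring

lemma hasDerivAt_oddS (b : ℝ) {w : ℝ} (hw : |w| < 1) :
    HasDerivAt (fun w => ∑' k : ℕ, (pochCoef b k / (2*(k:ℝ)+1)) * w^(2*k+1))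
      ((1 - w^2)^(-b)) w := by
  set m := ⌈|b|⌉₊ with hm
  have hbm : |b| ≤ m := Nat.le_ceil _
  set r : ℝ := (|w| + 1) / 2 with hrdef
  have hr0 : 0 < r := by positivity
  have hwr : |w| < r := by rw [hrdef]; linarith
  have hr1 : r < 1 := by rw [hrdef]; linarith
  have hr2 : |r^2| < 1 := by
    rw [abs_of_pos (by positivity)]
    nlinarith
  have hw2 : |w^2| < 1 := by
    rw [abs_of_nonneg (sq_nonneg w)]
    exact (sq_lt_one_iff_abs_lt_one w).2 hw
  have key : HasDerivAt (fun w => ∑' k : ℕ, (pochCoef b k / (2*(k:ℝ)+1)) * w^(2*k+1))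
      (∑' k : ℕ, pochCoef b k * (w^2)^k) w := by
    apply hasDerivAt_tsum_of_isPreconnected
      (u := fun k : ℕ => ((k:ℝ)+1)^m * (r^2)^k)
      (t := Metric.ball (0:ℝ) r) (y₀ := (0:ℝ))
      (g' := fun k y => pochCoef b k * (y^2)^k)
    · exact summable_geom_pow m hr2
    · exact Metric.isOpen_ball
    · exact (convex_ball _ _).isPreconnected
    · intro k y _
      have h := (hasDerivAt_pow (2*k+1) y).const_mul (pochCoef b k / (2*(k:ℝ)+1))
      have h2k : (2*(k:ℝ)+1) ≠ 0 := by positivity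
      refine h.congr_deriv (Eq.symm ?_)
      have e : (2*k+1-1 : ℕ) = 2*k := by omega
      rw [e, ← pow_mul]
      push_cast
      field_simp
    · intro k y hy
      have hyr : |y| ≤ r := (mem_ball_zero_iff.1 hy).le
      rw [norm_eq_abs, abs_mul, abs_pow, abs_of_nonneg (sq_nonneg y)]
      have h1 : y^2 ≤ r^2 := by
        have := sq_abs y ▸ pow_le_pow_left₀ (abs_nonneg y) hyr 2
        linarith
      exact mul_le_mul (pochCoef_bound b m hbm k)
        (pow_le_pow_left₀ (sq_nonneg y) h1 k) (by positivity) (by positivity)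
    · exact Metric.mem_ball_self hr0
    · exact Summable.congr summable_zero (fun k => by simp)
    · exact mem_ball_zero_iff.2 (by rwa [norm_eq_abs])
  have e : (∑' k : ℕ, pochCoef b k * (w^2)^k) = (1 - w^2)^(-b) := binS_eq b hw2
  rwa [e] at key

/-- `dixonF` is a first integral of `x' = αx(1 − x cos y)`, `y' = −(α−1)x sin y`:
its derivative along the vector field vanishes wherever `sin y > 0` and `α ≠ 1`. -/
theorem dixonF_first_integral (α : ℝ) (hα : α ≠ 1) (x y : ℝ) (hy : 0 < sin y) :
    α * x * (1 - x * cos y) * deriv (fun x' => dixonF α x' y) x -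
      (α - 1) * x * sin y * deriv (fun y' => dixonF α x y') y = 0 := by
  set b : ℝ := 1 + α / (2 * (α - 1)) with hb
  set p : ℝ := α / (1 - α) with hp
  have hα1 : α - 1 ≠ 0 := sub_ne_zero.2 hα
  have hα1' : (1:ℝ) - α ≠ 0 := fun h => hα1 (by linarith [sub_eq_zero.1 h])
  have hs := hy
  have hcos : |cos y| < 1 := by
    have h1 : cos y ^ 2 < 1 := by nlinarith [sin_sq_add_cos_sq y]
    exact (sq_lt_one_iff_abs_lt_one (cos y)).1 h1
  -- x-derivative
  have hdx : deriv (fun x' => dixonF α x' y) x = sin y ^ p := by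
    have h : HasDerivAt (fun x' => dixonF α x' y) (sin y ^ p) x := by
      have h1 : HasDerivAt (fun x' : ℝ => x' * sin y ^ p) (1 * sin y ^ p) x :=
        (hasDerivAt_id x).mul_const _
      simpa [dixonF] using h1.sub_const ((α / (α - 1)) * cos y * gauss2F1 (1 / 2) (1 + α / (2 * (α - 1))) (3 / 2) (cos y ^ 2))
    exact h.deriv
  -- y-derivative
  have hdy : deriv (fun y' => dixonF α x y') y
      = x * ((p * sin y ^ (p - 1)) * cos y)
        - (α / (α - 1)) * ((1 - cos y ^ 2) ^ (-b) * (-sin y)) := by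
    have h1 : HasDerivAt (fun y' : ℝ => x * sin y' ^ p)
        (x * ((p * sin y ^ (p - 1)) * cos y)) y := by
      have hr : HasDerivAt (fun y' : ℝ => sin y' ^ p) ((p * sin y ^ (p - 1)) * cos y) y :=
        (Real.hasDerivAt_rpow_const (x := sin y) (p := p) (Or.inl hs.ne')).comp y
          (Real.hasDerivAt_sin y)
      exact hr.const_mul x
    have h2 : HasDerivAt
        (fun y' : ℝ => (α / (α - 1)) *
          (∑' k : ℕ, (pochCoef b k / (2*(k:ℝ)+1)) * (cos y')^(2*k+1)))
        ((α / (α - 1)) * ((1 - cos y ^ 2) ^ (-b) * (-sin y))) y := by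
      have hG : HasDerivAt
          (fun y' : ℝ => ∑' k : ℕ, (pochCoef b k / (2*(k:ℝ)+1)) * (cos y')^(2*k+1))
          ((1 - cos y ^ 2) ^ (-b) * (-sin y)) y :=
        (hasDerivAt_oddS b hcos).comp y (Real.hasDerivAt_cos y)
      exact hG.const_mul _
    have heq : (fun y' => dixonF α x y')
        = fun y' => x * sin y' ^ p - (α / (α - 1)) *
            (∑' k : ℕ, (pochCoef b k / (2*(k:ℝ)+1)) * (cos y')^(2*k+1)) := by
      funext y'
      rw [dixonF, mul_assoc, gauss_link b (cos y')]
    rw [heq]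
    exact (h1.sub h2).deriv
  rw [hdx, hdy]
  -- algebraic finish
  have h1c : (1:ℝ) - cos y ^ 2 = sin y ^ 2 := by nlinarith [sin_sq_add_cos_sq y]
  have h2 : ((sin y) ^ 2 : ℝ) ^ (-b) = sin y ^ (p - 2) := by
    rw [← Real.rpow_natCast (sin y) 2, ← Real.rpow_mul hs.le]
    congr 1
    rw [hb, hp]
    push_cast
    field_simp
    ring
  have h3 : sin y ^ (p - 1) = sin y ^ (p - 2) * sin y := by
    rw [show p - 1 = (p - 2) + 1 by ring, Real.rpow_add_one hs.ne']
  have h4 : sin y ^ p = sin y ^ (p - 2) * sin y * sin y := by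
    rw [← h3, ← Real.rpow_add_one hs.ne' (p - 1)]
    congr 1
    ring
  rw [h1c, h2, h3, h4, hp]
  field_simp
  ring
end
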